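/- Prenexing an existential quantifier through an arbitrary boolean context: let ψ and φ be QBFs, let p be a variable occurring in ψ but not free in φ and not in the scope of any quantifier in ψ, let Y ⊆ vars(ψ) \ vars(φ), let X⁻ = {x⁻ : x ∈ X} and X⁺ = {x⁺ : x ∈ X} be fresh, and let σ rename each x ∈ X to x⁺. Then ∃Y (ψ[p/∃X φ]) is logically equivalent to ∀X⁻ ∃(Y ∪ X⁺ ∪ {p}) (ψ ∧ (p ↔ φ[σ]) ∧ ⋀_{x∈X} (¬p → (x⁺ ↔ x⁻))). -/
import Mathlib


/-- Syntax of full quantified boolean formulas. -/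
inductive Fml : Type where
  | var : ℕ → Fml
  | tru : Fml
  | fls : Fml
  | neg : Fml → Fml
  | conj : Fml → Fml → Fml
  | disj : Fml → Fml → Fml
  | imp : Fml → Fml → Fml
  | biff : Fml → Fml → Fml
  | qex : Finset ℕ → Fml → Fml
  | qall : Finset ℕ → Fml → Fml
  deriving DecidableEq

namespace Fml

/-- Satisfaction of a formula by a valuation. -/
def Sat : (ℕ → Bool) → Fml → Prop
  | V, var p => V p = true
  | _, tru => True
  | _, fls => False
  | V, neg φ => ¬ Sat V φ
  | V, conj φ ψ => Sat V φ ∧ Sat V ψ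
  | V, disj φ ψ => Sat V φ ∨ Sat V ψ
  | V, imp φ ψ => Sat V φ → Sat V ψ
  | V, biff φ ψ => (Sat V φ ↔ Sat V ψ)
  | V, qex X φ => ∃ W : ℕ → Bool, (∀ q ∉ X, W q = V q) ∧ Sat W φ
  | V, qall X φ => ∀ W : ℕ → Bool, (∀ q ∉ X, W q = V q) → Sat W φ

/-- Logical equivalence: same truth value under every valuation. -/
def Equiv (φ ψ : Fml) : Prop := ∀ V : ℕ → Bool, Sat V φ ↔ Sat V ψ

/-- All variables occurring (free or bound, including quantifier blocks). -/
def vars : Fml → Finset ℕ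
  | var p => {p}
  | tru => ∅
  | fls => ∅
  | neg φ => vars φ
  | conj φ ψ => vars φ ∪ vars ψ
  | disj φ ψ => vars φ ∪ vars ψ
  | imp φ ψ => vars φ ∪ vars ψ
  | biff φ ψ => vars φ ∪ vars ψ
  | qex X φ => X ∪ vars φ
  | qall X φ => X ∪ vars φ

/-- Free variables. -/
def freeVars : Fml → Finset ℕ
  | var p => {p}
  | tru => ∅
  | fls => ∅
  | neg φ => freeVars φ
  | conj φ ψ => freeVars φ ∪ freeVars ψ
  | disj φ ψ => freeVars φ ∪ freeVars ψ
  | imp φ ψ => freeVars φ ∪ freeVars ψ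
  | biff φ ψ => freeVars φ ∪ freeVars ψ
  | qex X φ => freeVars φ \ X
  | qall X φ => freeVars φ \ X

/-- Bound variables. -/
def boundVars : Fml → Finset ℕ
  | var _ => ∅
  | tru => ∅
  | fls => ∅
  | neg φ => boundVars φ
  | conj φ ψ => boundVars φ ∪ boundVars ψ
  | disj φ ψ => boundVars φ ∪ boundVars ψ
  | imp φ ψ => boundVars φ ∪ boundVars ψ
  | biff φ ψ => boundVars φ ∪ boundVars ψ
  | qex X φ => X ∪ boundVars φ
  | qall X φ => X ∪ boundVars φ

/-- Substitution of `ρ` for free occurrences of the variable `p`. -/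
def subst (p : ℕ) (ρ : Fml) : Fml → Fml
  | var q => if q = p then ρ else var q
  | tru => tru
  | fls => fls
  | neg φ => neg (subst p ρ φ)
  | conj φ ψ => conj (subst p ρ φ) (subst p ρ ψ)
  | disj φ ψ => disj (subst p ρ φ) (subst p ρ ψ)
  | imp φ ψ => imp (subst p ρ φ) (subst p ρ ψ)
  | biff φ ψ => biff (subst p ρ φ) (subst p ρ ψ)
  | qex X φ => qex X (if p ∈ X then φ else subst p ρ φ)
  | qall X φ => qall X (if p ∈ X then φ else subst p ρ φ)

/-- Simultaneous substitution given by an association list. -/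
def simSubst (σ : List (ℕ × Fml)) : Fml → Fml
  | var q => ((σ.find? (fun e => e.1 == q)).map Prod.snd).getD (var q)
  | tru => tru
  | fls => fls
  | neg φ => neg (simSubst σ φ)
  | conj φ ψ => conj (simSubst σ φ) (simSubst σ ψ)
  | disj φ ψ => disj (simSubst σ φ) (simSubst σ ψ)
  | imp φ ψ => imp (simSubst σ φ) (simSubst σ ψ)
  | biff φ ψ => biff (simSubst σ φ) (simSubst σ ψ)
  | qex X φ => qex X (simSubst (σ.filter (fun e => decide (e.1 ∉ X))) φ)
  | qall X φ => qall X (simSubst (σ.filter (fun e => decide (e.1 ∉ X))) φ)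

/-- Conjunction of a list of formulas (`⊤` for the empty list). -/
def bigAnd : List Fml → Fml
  | [] => tru
  | [φ] => φ
  | φ :: rest => conj φ (bigAnd rest)

/-- Length of a formula: variables and operators count 1, except that
negation does not count; a block `QX` contributes `1 + |X|`. -/
def len : Fml → ℕ
  | var _ => 1
  | tru => 1
  | fls => 1
  | neg φ => len φ
  | conj φ ψ => 1 + len φ + len ψ
  | disj φ ψ => 1 + len φ + len ψ
  | imp φ ψ => 1 + len φ + len ψ
  | biff φ ψ => 1 + len φ + len ψ
  | qex X φ => 1 + X.card + len φ
  | qall X φ => 1 + X.card + len φ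

/-- Quantifier depth. -/
def md : Fml → ℕ
  | var _ => 0
  | tru => 0
  | fls => 0
  | neg φ => md φ
  | conj φ ψ => max (md φ) (md ψ)
  | disj φ ψ => max (md φ) (md ψ)
  | imp φ ψ => max (md φ) (md ψ)
  | biff φ ψ => max (md φ) (md ψ)
  | qex _ φ => 1 + md φ
  | qall _ φ => 1 + md φ

/-- Number of quantifier blocks. -/
def nb : Fml → ℕ
  | var _ => 0
  | tru => 0
  | fls => 0
  | neg φ => nb φ
  | conj φ ψ => nb φ + nb ψ
  | disj φ ψ => nb φ + nb ψ
  | imp φ ψ => nb φ + nb ψ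
  | biff φ ψ => nb φ + nb ψ
  | qex _ φ => 1 + nb φ
  | qall _ φ => 1 + nb φ

/-- Total number of quantified variables (sum of block sizes). -/
def nv : Fml → ℕ
  | var _ => 0
  | tru => 0
  | fls => 0
  | neg φ => nv φ
  | conj φ ψ => nv φ + nv ψ
  | disj φ ψ => nv φ + nv ψ
  | imp φ ψ => nv φ + nv ψ
  | biff φ ψ => nv φ + nv ψ
  | qex X φ => X.card + nv φ
  | qall X φ => X.card + nv φ

/-- Boolean (quantifier-free) formulas. -/
def isBool : Fml → Bool
  | var _ => true
  | tru => true
  | fls => true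
  | neg φ => isBool φ
  | conj φ ψ => isBool φ && isBool ψ
  | disj φ ψ => isBool φ && isBool ψ
  | imp φ ψ => isBool φ && isBool ψ
  | biff φ ψ => isBool φ && isBool ψ
  | qex _ _ => false
  | qall _ _ => false

/-- Prenex form: a prefix of quantifier blocks followed by a boolean formula. -/
def IsPrenex : Fml → Prop
  | qex _ φ => IsPrenex φ
  | qall _ φ => IsPrenex φ
  | φ => isBool φ = true

end Fml

/-- Quantifiers. -/
inductive Quant : Type where
  | qex : Quant
  | qall : Quant
  deriving DecidableEq

/-- The dual of a quantifier. -/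
def Quant.dual : Quant → Quant
  | .qex => .qall
  | .qall => .qex

/-- Applying a quantifier block to a formula. -/
def qApply : Quant → Finset ℕ → Fml → Fml
  | .qex, X, φ => Fml.qex X φ
  | .qall, X, φ => Fml.qall X φ

namespace Fml
/-- `p` is not in the scope of any quantifier of the formula
(no occurrence of `p` lies under a quantifier). -/
def OutsideQuantifiers (p : ℕ) : Fml → Prop
  | var _ => True
  | tru => True
  | fls => True
  | neg φ => OutsideQuantifiers p φ
  | conj φ ψ => OutsideQuantifiers p φ ∧ OutsideQuantifiers p ψ
  | disj φ ψ => OutsideQuantifiers p φ ∧ OutsideQuantifiers p ψ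
  | imp φ ψ => OutsideQuantifiers p φ ∧ OutsideQuantifiers p ψ
  | biff φ ψ => OutsideQuantifiers p φ ∧ OutsideQuantifiers p ψ
  | qex X φ => p ∉ X ∧ p ∉ vars φ
  | qall X φ => p ∉ X ∧ p ∉ vars φ
end Fml

namespace Fml

theorem freeVars_subset_vars : ∀ φ : Fml, φ.freeVars ⊆ φ.vars := by
  intro φ
  induction φ with
  | var p => simp [freeVars, vars]
  | tru => simp [freeVars, vars]
  | fls => simp [freeVars, vars]
  | neg φ ih => simpa [freeVars, vars] using ih
  | conj φ ψ ih1 ih2 =>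
      simp only [freeVars, vars]; exact Finset.union_subset_union ih1 ih2
  | disj φ ψ ih1 ih2 =>
      simp only [freeVars, vars]; exact Finset.union_subset_union ih1 ih2
  | imp φ ψ ih1 ih2 =>
      simp only [freeVars, vars]; exact Finset.union_subset_union ih1 ih2
  | biff φ ψ ih1 ih2 =>
      simp only [freeVars, vars]; exact Finset.union_subset_union ih1 ih2
  | qex X φ ih =>
      simp only [freeVars, vars]
      exact Finset.sdiff_subset.trans (ih.trans Finset.subset_union_right)
  | qall X φ ih =>
      simp only [freeVars, vars]
      exact Finset.sdiff_subset.trans (ih.trans Finset.subset_union_right)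

theorem sat_of_eqOn_free : ∀ (φ : Fml) (V W : ℕ → Bool),
    (∀ q ∈ φ.freeVars, V q = W q) → Sat V φ → Sat W φ := by
  intro φ
  induction φ with
  | var p =>
      intro V W h hs
      simp only [Sat] at hs ⊢
      rw [← h p (by simp [freeVars])]; exact hs
  | tru => intro V W h hs; trivial
  | fls => intro V W h hs; exact hs
  | neg φ ih =>
      intro V W h hs hsW
      exact hs (ih W V (fun q hq => (h q hq).symm) hsW)
  | conj φ ψ ih1 ih2 =>
      intro V W h hs
      exact ⟨ih1 V W (fun q hq => h q (by simp [freeVars, hq])) hs.1,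
        ih2 V W (fun q hq => h q (by simp [freeVars, hq])) hs.2⟩
  | disj φ ψ ih1 ih2 =>
      intro V W h hs
      rcases hs with hs | hs
      · exact Or.inl (ih1 V W (fun q hq => h q (by simp [freeVars, hq])) hs)
      · exact Or.inr (ih2 V W (fun q hq => h q (by simp [freeVars, hq])) hs)
  | imp φ ψ ih1 ih2 =>
      intro V W h hs ha
      exact ih2 V W (fun q hq => h q (by simp [freeVars, hq]))
        (hs (ih1 W V (fun q hq => (h q (by simp [freeVars, hq])).symm) ha))
  | biff φ ψ ih1 ih2 =>
      intro V W h hs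
      constructor
      · intro ha
        exact ih2 V W (fun q hq => h q (by simp [freeVars, hq]))
          (hs.mp (ih1 W V (fun q hq => (h q (by simp [freeVars, hq])).symm) ha))
      · intro ha
        exact ih1 V W (fun q hq => h q (by simp [freeVars, hq]))
          (hs.mpr (ih2 W V (fun q hq => (h q (by simp [freeVars, hq])).symm) ha))
  | qex X φ ih =>
      rintro V W h ⟨W', hW', hs⟩
      refine ⟨fun q => if q ∈ X then W' q else W q, fun q hq => by simp [hq], ?_⟩
      refine ih W' _ (fun q hq => ?_) hs
      by_cases hX : q ∈ X
      · simp [hX]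
      · simp only [hX, if_neg hX, if_false]
        rw [hW' q hX]
        exact h q (by simp [freeVars, Finset.mem_sdiff, hq, hX])
  | qall X φ ih =>
      intro V W h hs W' hW'
      refine ih (fun q => if q ∈ X then W' q else V q) W' (fun q hq => ?_)
        (hs _ (fun q hq => by simp [hq]))
      by_cases hX : q ∈ X
      · simp [hX]
      · simp only [if_neg hX]
        rw [h q (by simp [freeVars, Finset.mem_sdiff, hq, hX]), hW' q hX]

theorem sat_congr_free (φ : Fml) (V W : ℕ → Bool)
    (h : ∀ q ∈ φ.freeVars, V q = W q) : Sat V φ ↔ Sat W φ :=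
  ⟨sat_of_eqOn_free φ V W h, sat_of_eqOn_free φ W V (fun q hq => (h q hq).symm)⟩

theorem subst_eq_of_notMem (p : ℕ) (ρ : Fml) :
    ∀ φ : Fml, p ∉ φ.vars → subst p ρ φ = φ := by
  intro φ
  induction φ with
  | var q => intro h; simp [vars] at h; simp [subst, Ne.symm h]
  | tru => intro _; rfl
  | fls => intro _; rfl
  | neg φ ih => intro h; simp only [subst, ih h]
  | conj φ ψ ih1 ih2 =>
      intro h; simp only [vars, Finset.mem_union, not_or] at h
      simp only [subst, ih1 h.1, ih2 h.2]
  | disj φ ψ ih1 ih2 =>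
      intro h; simp only [vars, Finset.mem_union, not_or] at h
      simp only [subst, ih1 h.1, ih2 h.2]
  | imp φ ψ ih1 ih2 =>
      intro h; simp only [vars, Finset.mem_union, not_or] at h
      simp only [subst, ih1 h.1, ih2 h.2]
  | biff φ ψ ih1 ih2 =>
      intro h; simp only [vars, Finset.mem_union, not_or] at h
      simp only [subst, ih1 h.1, ih2 h.2]
  | qex X φ ih =>
      intro h; simp only [vars, Finset.mem_union, not_or] at h
      simp only [subst, if_neg h.1, ih h.2]
  | qall X φ ih =>
      intro h; simp only [vars, Finset.mem_union, not_or] at h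
      simp only [subst, if_neg h.1, ih h.2]

theorem sat_subst_outside (p : ℕ) (ρ : Fml) (V : ℕ → Bool) (b : Bool)
    (hb : b = true ↔ Sat V ρ) :
    ∀ φ : Fml, OutsideQuantifiers p φ →
      (Sat V (subst p ρ φ) ↔ Sat (Function.update V p b) φ) := by
  intro φ
  induction φ with
  | var q =>
      intro _
      by_cases hq : q = p
      · subst hq
        simp only [subst, if_pos rfl, Sat, Function.update_self]
        exact hb.symm
      · simp only [subst, if_neg hq, Sat, Function.update_of_ne hq]
  | tru => intro _; rfl
  | fls => intro _; rfl
  | neg φ ih => intro h; simp only [subst, Sat]; rw [ih h]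
  | conj φ ψ ih1 ih2 =>
      intro h; simp only [subst, Sat]; rw [ih1 h.1, ih2 h.2]
  | disj φ ψ ih1 ih2 =>
      intro h; simp only [subst, Sat]; rw [ih1 h.1, ih2 h.2]
  | imp φ ψ ih1 ih2 =>
      intro h; simp only [subst, Sat]; rw [ih1 h.1, ih2 h.2]
  | biff φ ψ ih1 ih2 =>
      intro h; simp only [subst, Sat]; rw [ih1 h.1, ih2 h.2]
  | qex X φ ih =>
      rintro ⟨hX, hv⟩
      simp only [subst, if_neg hX, subst_eq_of_notMem p ρ φ hv]
      refine sat_congr_free _ _ _ (fun q hq => ?_)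
      have hqp : q ≠ p := by
        rintro rfl
        simp only [freeVars, Finset.mem_sdiff] at hq
        exact hv (freeVars_subset_vars φ hq.1)
      rw [Function.update_of_ne hqp]
  | qall X φ ih =>
      rintro ⟨hX, hv⟩
      simp only [subst, if_neg hX, subst_eq_of_notMem p ρ φ hv]
      refine sat_congr_free _ _ _ (fun q hq => ?_)
      have hqp : q ≠ p := by
        rintro rfl
        simp only [freeVars, Finset.mem_sdiff] at hq
        exact hv (freeVars_subset_vars φ hq.1)
      rw [Function.update_of_ne hqp]

end Fml
namespace Fml

theorem find?_mapped (g : ℕ → ℕ) (q : ℕ) : ∀ L : List ℕ,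
    ((L.map (fun x => (x, Fml.var (g x)))).find? (fun e => e.1 == q)) =
      if q ∈ L then some (q, Fml.var (g q)) else none := by
  intro L
  induction L with
  | nil => simp
  | cons x t ih =>
      by_cases hx : x = q
      · subst hx
        simp [List.find?]
      · simp only [List.map_cons, List.find?]
        have : ((x, Fml.var (g x)).1 == q) = false := by simp [hx]
        rw [this, ih]
        simp [show ¬(q = x) from fun h => hx h.symm]

theorem map_filter_pairs (g : ℕ → ℕ) (Z : Finset ℕ) : ∀ L : List ℕ,
    ((L.map (fun x => (x, Fml.var (g x)))).filter (fun e => decide (e.1 ∉ Z)))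
      = (L.filter (fun x => decide (x ∉ Z))).map (fun x => (x, Fml.var (g x))) := by
  intro L
  induction L with
  | nil => simp
  | cons x t ih =>
      simp only [List.map_cons, List.filter_cons, decide_not] at ih ⊢
      by_cases hx : x ∈ Z
      · simp [hx, ih]
      · simp [hx, ih]

theorem sat_rename (g : ℕ → ℕ) : ∀ (φ : Fml) (L : List ℕ) (V : ℕ → Bool),
    (∀ x ∈ L, g x ∉ φ.vars) →
    (Sat V (simSubst (L.map (fun x => (x, var (g x)))) φ) ↔
      Sat (fun q => if q ∈ L then V (g q) else V q) φ) := by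
  intro φ
  induction φ with
  | var r =>
      intro L V h
      simp only [simSubst, find?_mapped]
      by_cases hr : r ∈ L
      · simp [hr, Sat]
      · simp [hr, Sat]
  | tru => intro L V h; rfl
  | fls => intro L V h; rfl
  | neg φ ih =>
      intro L V h
      simp only [simSubst, Sat]
      rw [ih L V h]
  | conj φ ψ ih1 ih2 =>
      intro L V h
      simp only [vars, Finset.mem_union, not_or] at h
      simp only [simSubst, Sat]
      rw [ih1 L V (fun x hx => (h x hx).1), ih2 L V (fun x hx => (h x hx).2)]
  | disj φ ψ ih1 ih2 =>
      intro L V h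
      simp only [vars, Finset.mem_union, not_or] at h
      simp only [simSubst, Sat]
      rw [ih1 L V (fun x hx => (h x hx).1), ih2 L V (fun x hx => (h x hx).2)]
  | imp φ ψ ih1 ih2 =>
      intro L V h
      simp only [vars, Finset.mem_union, not_or] at h
      simp only [simSubst, Sat]
      rw [ih1 L V (fun x hx => (h x hx).1), ih2 L V (fun x hx => (h x hx).2)]
  | biff φ ψ ih1 ih2 =>
      intro L V h
      simp only [vars, Finset.mem_union, not_or] at h
      simp only [simSubst, Sat]
      rw [ih1 L V (fun x hx => (h x hx).1), ih2 L V (fun x hx => (h x hx).2)]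
  | qex Z φ ih =>
      intro L V h
      simp only [vars, Finset.mem_union, not_or] at h
      simp only [simSubst, map_filter_pairs, Sat]
      have hmemL' : ∀ q, q ∈ L.filter (fun x => decide (x ∉ Z)) ↔ (q ∈ L ∧ q ∉ Z) := by
        intro q; simp [List.mem_filter]
      constructor
      · rintro ⟨W, hW, hs⟩
        rw [ih _ W (fun x hx => (h x ((hmemL' x).mp hx).1).2)] at hs
        refine ⟨fun q => if q ∈ Z then W q else
            (if q ∈ L then V (g q) else V q), fun q hq => by simp [hq], ?_⟩
        refine sat_of_eqOn_free φ _ _ (fun q hq => ?_) hs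
        by_cases hqZ : q ∈ Z
        · have : q ∉ L.filter (fun x => decide (x ∉ Z)) := by
            simp [hmemL', hqZ]
          simp [this, hqZ]
        · by_cases hqL : q ∈ L
          · have hq1 : q ∈ L.filter (fun x => decide (x ∉ Z)) := by
              simp [hmemL', hqZ, hqL]
            have hgq : g q ∉ Z := (h q hqL).1
            simp only [if_pos hq1, if_neg hqZ, if_pos hqL]
            rw [hW (g q) hgq]
          · have hq1 : q ∉ L.filter (fun x => decide (x ∉ Z)) := by
              simp [hmemL', hqL]
            simp only [if_neg hq1, if_neg hqZ, if_neg hqL]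
            rw [hW q hqZ]
      · rintro ⟨W', hW', hs⟩
        refine ⟨fun q => if q ∈ Z then W' q else V q, fun q hq => by simp [hq], ?_⟩
        rw [ih _ _ (fun x hx => (h x ((hmemL' x).mp hx).1).2)]
        refine sat_of_eqOn_free φ W' _ (fun q hq => ?_)  hs
        by_cases hqZ : q ∈ Z
        · have : q ∉ L.filter (fun x => decide (x ∉ Z)) := by
            simp [hmemL', hqZ]
          simp [this, hqZ]
        · by_cases hqL : q ∈ L
          · have hq1 : q ∈ L.filter (fun x => decide (x ∉ Z)) := by
              simp [hmemL', hqZ, hqL]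
            have hgq : g q ∉ Z := (h q hqL).1
            simp only [if_pos hq1, if_neg hgq]
            rw [hW' q hqZ]
            simp [hqL]
          · have hq1 : q ∉ L.filter (fun x => decide (x ∉ Z)) := by
              simp [hmemL', hqL]
            simp only [if_neg hq1, if_neg hqZ]
            rw [hW' q hqZ]
            simp [hqL]
  | qall Z φ ih =>
      intro L V h
      simp only [vars, Finset.mem_union, not_or] at h
      simp only [simSubst, map_filter_pairs, Sat]
      have hmemL' : ∀ q, q ∈ L.filter (fun x => decide (x ∉ Z)) ↔ (q ∈ L ∧ q ∉ Z) := by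
        intro q; simp [List.mem_filter]
      constructor
      · intro hs W' hW'
        have := hs (fun q => if q ∈ Z then W' q else V q) (fun q hq => by simp [hq])
        rw [ih _ _ (fun x hx => (h x ((hmemL' x).mp hx).1).2)] at this
        refine sat_of_eqOn_free φ _ W' (fun q hq => ?_) this
        by_cases hqZ : q ∈ Z
        · have : q ∉ L.filter (fun x => decide (x ∉ Z)) := by
            simp [hmemL', hqZ]
          simp [this, hqZ]
        · by_cases hqL : q ∈ L
          · have hq1 : q ∈ L.filter (fun x => decide (x ∉ Z)) := by
              simp [hmemL', hqZ, hqL]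
            have hgq : g q ∉ Z := (h q hqL).1
            simp only [if_pos hq1, if_neg hgq]
            rw [hW' q hqZ]
            simp [hqL]
          · have hq1 : q ∉ L.filter (fun x => decide (x ∉ Z)) := by
              simp [hmemL', hqL]
            simp only [if_neg hq1, if_neg hqZ]
            rw [hW' q hqZ]
            simp [hqL]
      · intro hs W hW
        rw [ih _ _ (fun x hx => (h x ((hmemL' x).mp hx).1).2)]
        have := hs (fun q => if q ∈ Z then W q else
            (if q ∈ L then V (g q) else V q)) (fun q hq => by simp [hq])
        refine sat_of_eqOn_free φ _ _ (fun q hq => ?_) this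
        by_cases hqZ : q ∈ Z
        · have : q ∉ L.filter (fun x => decide (x ∉ Z)) := by
            simp [hmemL', hqZ]
          simp [this, hqZ]
        · by_cases hqL : q ∈ L
          · have hq1 : q ∈ L.filter (fun x => decide (x ∉ Z)) := by
              simp [hmemL', hqZ, hqL]
            have hgq : g q ∉ Z := (h q hqL).1
            simp only [if_pos hq1, if_neg hqZ, if_pos hqL]
            rw [hW (g q) hgq]
          · have hq1 : q ∉ L.filter (fun x => decide (x ∉ Z)) := by
              simp [hmemL', hqL]
            simp only [if_neg hq1, if_neg hqZ, if_neg hqL]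
            rw [hW q hqZ]

theorem sat_bigAnd (V : ℕ → Bool) : ∀ l : List Fml,
    (Sat V (bigAnd l) ↔ ∀ χ ∈ l, Sat V χ) := by
  intro l
  induction l with
  | nil => simp [bigAnd, Sat]
  | cons a t ih =>
      cases t with
      | nil => simp [bigAnd]
      | cons b t' =>
          simp only [bigAnd, Sat] at ih ⊢
          rw [ih]
          simp [List.mem_cons]

end Fml
open Fml in
/-- prenexing an existential quantifier through an arbitrary
boolean context (Lemma 1, existential case): under the stated freshness and
occurrence conditions,
`∃Y (ψ[p/∃X φ]) ≡
 ∀X⁻ ∃(Y ∪ X⁺ ∪ {p}) (ψ ∧ (p ↔ φ[σ]) ∧ ⋀_{x∈X}(¬p → (x⁺ ↔ x⁻)))`. -/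
theorem prenex_exists (ψ φ : Fml) (p : ℕ) (Y X : Finset ℕ) (mp mn : ℕ → ℕ)
    (hpocc : p ∈ ψ.vars) (hpφ : p ∉ φ.freeVars) (hpscope : OutsideQuantifiers p ψ)
    (hY : Y ⊆ ψ.vars \ φ.vars)
    (hfresh : ∀ x ∈ X,
      mp x ∉ ψ.vars ∪ φ.vars ∪ Y ∪ X ∪ {p} ∧ mn x ∉ ψ.vars ∪ φ.vars ∪ Y ∪ X ∪ {p})
    (hdist : ∀ x ∈ X, ∀ x' ∈ X, ∀ b b' : Bool,
      (if b then mp x else mn x) = (if b' then mp x' else mn x') → (x, b) = (x', b')) :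
    Equiv (qex Y (subst p (qex X φ) ψ))
      (qall (X.image mn) (qex (Y ∪ X.image mp ∪ {p})
        (conj ψ (conj
          (biff (var p) (simSubst (X.toList.map (fun x => (x, var (mp x)))) φ))
          (bigAnd (X.toList.map
            (fun x => imp (neg (var p)) (biff (var (mp x)) (var (mn x)))))))))) := by
  classical
  have hmp : ∀ x ∈ X, mp x ∉ ψ.vars ∧ mp x ∉ φ.vars ∧ mp x ∉ Y ∧ mp x ∉ X ∧ mp x ≠ p := by
    intro x hx
    have := (hfresh x hx).1
    simp only [Finset.mem_union, Finset.mem_singleton, not_or] at this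
    tauto
  have hmn : ∀ x ∈ X, mn x ∉ ψ.vars ∧ mn x ∉ φ.vars ∧ mn x ∉ Y ∧ mn x ∉ X ∧ mn x ≠ p := by
    intro x hx
    have := (hfresh x hx).2
    simp only [Finset.mem_union, Finset.mem_singleton, not_or] at this
    tauto
  have hmp_inj : ∀ x ∈ X, ∀ x' ∈ X, mp x = mp x' → x = x' := by
    intro x hx x' hx' h
    have := hdist x hx x' hx' true true (by simpa using h)
    simpa using congrArg Prod.fst this
  have hmn_inj : ∀ x ∈ X, ∀ x' ∈ X, mn x = mn x' → x = x' := by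
    intro x hx x' hx' h
    have := hdist x hx x' hx' false false (by simpa using h)
    simpa using congrArg Prod.fst this
  have hmp_ne_mn : ∀ x ∈ X, ∀ x' ∈ X, mp x ≠ mn x' := by
    intro x hx x' hx' h
    have := hdist x hx x' hx' true false (by simpa using h)
    simpa using congrArg Prod.snd this
  have hYφ : ∀ q ∈ Y, q ∉ φ.vars := fun q hq => (Finset.mem_sdiff.mp (hY hq)).2
  have hrename : ∀ W : ℕ → Bool,
      Sat W (simSubst (X.toList.map (fun x => (x, var (mp x)))) φ) ↔
        Sat (fun q => if q ∈ X.toList then W (mp q) else W q) φ :=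
    fun W => sat_rename mp φ X.toList W
      (fun x hx => (hmp x (Finset.mem_toList.mp hx)).2.1)
  have hbig : ∀ W : ℕ → Bool,
      Sat W (bigAnd (X.toList.map
          (fun x => imp (neg (var p)) (biff (var (mp x)) (var (mn x)))))) ↔
        ∀ x ∈ X, ¬ W p = true → (W (mp x) = true ↔ W (mn x) = true) := by
    intro W
    rw [sat_bigAnd]
    constructor
    · intro h x hx hp'
      have := h _ (List.mem_map.mpr ⟨x, Finset.mem_toList.mpr hx, rfl⟩)
      exact this hp'
    · rintro h χ hχ
      obtain ⟨x, hx, rfl⟩ := List.mem_map.mp hχ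
      exact h x (Finset.mem_toList.mp hx)
  intro V
  simp only [Sat]
  constructor
  · rintro ⟨W₀, hW₀, hsat⟩
    intro Wm hWm
    by_cases hb : Sat W₀ (qex X φ)
    · obtain ⟨U, hU, hUφ⟩ := hb
      have hψ : Sat (Function.update W₀ p true) ψ :=
        (sat_subst_outside p (qex X φ) W₀ true
          ⟨fun _ => ⟨U, hU, hUφ⟩, fun _ => rfl⟩ ψ hpscope).mp hsat
      set W : ℕ → Bool := fun q => if q = p then true else if q ∈ Y then W₀ q
        else if hq : ∃ x ∈ X, mp x = q then U hq.choose else Wm q with hWdef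
      have hWp : W p = true := by rw [hWdef]; simp
      have hWmp : ∀ x ∈ X, W (mp x) = U x := by
        intro x hx
        have h1 : mp x ≠ p := (hmp x hx).2.2.2.2
        have h2 : mp x ∉ Y := (hmp x hx).2.2.1
        have hex : ∃ x' ∈ X, mp x' = mp x := ⟨x, hx, rfl⟩
        rw [hWdef]
        simp only [if_neg h1, if_neg h2, dif_pos hex]
        obtain ⟨hc1, hc2⟩ := hex.choose_spec
        rw [hmp_inj _ hc1 _ hx hc2]
      have hWelse : ∀ q, q ≠ p → q ∉ Y → q ∉ X.image mp → W q = Wm q := by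
        intro q h1 h2 h3
        have hnex : ¬ ∃ x ∈ X, mp x = q := by
          rintro ⟨x, hx, rfl⟩
          exact h3 (Finset.mem_image.mpr ⟨x, hx, rfl⟩)
        rw [hWdef]
        simp only [if_neg h1, if_neg h2, dif_neg hnex]
      refine ⟨W, ?_, ?_, ?_, ?_⟩
      · intro q hq
        simp only [Finset.mem_union, Finset.mem_singleton, not_or] at hq
        exact hWelse q hq.2 hq.1.1 hq.1.2
      · refine sat_of_eqOn_free ψ _ _ (fun q hq => ?_) hψ
        have hqv : q ∈ ψ.vars := freeVars_subset_vars ψ hq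
        by_cases hqp : q = p
        · subst hqp; rw [Function.update_self, hWp]
        · rw [Function.update_of_ne hqp]
          by_cases hqY : q ∈ Y
          · rw [hWdef]; simp [hqp, hqY]
          · have h3 : q ∉ X.image mp := by
              rw [Finset.mem_image]; rintro ⟨x, hx, rfl⟩; exact (hmp x hx).1 hqv
            have h4 : q ∉ X.image mn := by
              rw [Finset.mem_image]; rintro ⟨x, hx, rfl⟩; exact (hmn x hx).1 hqv
            rw [hWelse q hqp hqY h3, hWm q h4, hW₀ q hqY]
      · rw [hWp, hrename W]
        refine ⟨fun _ => ?_, fun _ => rfl⟩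
        refine sat_of_eqOn_free φ U _ (fun q hq => ?_) hUφ
        by_cases hqX : q ∈ X
        · rw [if_pos (Finset.mem_toList.mpr hqX), hWmp q hqX]
        · have hfv : q ∈ φ.vars := freeVars_subset_vars φ hq
          have hqp : q ≠ p := fun h => hpφ (h ▸ hq)
          have hqY : q ∉ Y := fun h => hYφ q h hfv
          have h3 : q ∉ X.image mp := by
            rw [Finset.mem_image]; rintro ⟨x, hx, rfl⟩; exact (hmp x hx).2.1 hfv
          have h4 : q ∉ X.image mn := by
            rw [Finset.mem_image]; rintro ⟨x, hx, rfl⟩; exact (hmn x hx).2.1 hfv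
          rw [hU q hqX, if_neg (fun h => hqX (Finset.mem_toList.mp h)),
            hWelse q hqp hqY h3, hWm q h4, hW₀ q hqY]
      · exact (hbig W).mpr (fun x hx hWp' => absurd hWp hWp')
    · have hψ : Sat (Function.update W₀ p false) ψ :=
        (sat_subst_outside p (qex X φ) W₀ false (iff_of_false (by simp) hb)
          ψ hpscope).mp hsat
      set W : ℕ → Bool := fun q => if q = p then false else if q ∈ Y then W₀ q
        else if hq : ∃ x ∈ X, mp x = q then Wm (mn hq.choose) else Wm q with hWdef
      have hWp : W p = false := by rw [hWdef]; simp
      have hWmp : ∀ x ∈ X, W (mp x) = Wm (mn x) := by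
        intro x hx
        have h1 : mp x ≠ p := (hmp x hx).2.2.2.2
        have h2 : mp x ∉ Y := (hmp x hx).2.2.1
        have hex : ∃ x' ∈ X, mp x' = mp x := ⟨x, hx, rfl⟩
        rw [hWdef]
        simp only [if_neg h1, if_neg h2, dif_pos hex]
        obtain ⟨hc1, hc2⟩ := hex.choose_spec
        rw [hmp_inj _ hc1 _ hx hc2]
      have hWelse : ∀ q, q ≠ p → q ∉ Y → q ∉ X.image mp → W q = Wm q := by
        intro q h1 h2 h3
        have hnex : ¬ ∃ x ∈ X, mp x = q := by
          rintro ⟨x, hx, rfl⟩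
          exact h3 (Finset.mem_image.mpr ⟨x, hx, rfl⟩)
        rw [hWdef]
        simp only [if_neg h1, if_neg h2, dif_neg hnex]
      refine ⟨W, ?_, ?_, ?_, ?_⟩
      · intro q hq
        simp only [Finset.mem_union, Finset.mem_singleton, not_or] at hq
        exact hWelse q hq.2 hq.1.1 hq.1.2
      · refine sat_of_eqOn_free ψ _ _ (fun q hq => ?_) hψ
        have hqv : q ∈ ψ.vars := freeVars_subset_vars ψ hq
        by_cases hqp : q = p
        · subst hqp; rw [Function.update_self, hWp]
        · rw [Function.update_of_ne hqp]
          by_cases hqY : q ∈ Y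
          · rw [hWdef]; simp [hqp, hqY]
          · have h3 : q ∉ X.image mp := by
              rw [Finset.mem_image]; rintro ⟨x, hx, rfl⟩; exact (hmp x hx).1 hqv
            have h4 : q ∉ X.image mn := by
              rw [Finset.mem_image]; rintro ⟨x, hx, rfl⟩; exact (hmn x hx).1 hqv
            rw [hWelse q hqp hqY h3, hWm q h4, hW₀ q hqY]
      · rw [hWp, hrename W]
        refine iff_of_false (by simp) ?_
        intro hcon
        apply hb
        refine ⟨fun q => if q ∈ X then (if q ∈ X.toList then W (mp q) else W q) else W₀ q,
          fun q hq => by simp [hq], ?_⟩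
        refine sat_of_eqOn_free φ _ _ (fun q hq => ?_) hcon
        by_cases hqX : q ∈ X
        · rw [if_pos hqX]
        · have hfv : q ∈ φ.vars := freeVars_subset_vars φ hq
          have hqp : q ≠ p := fun h => hpφ (h ▸ hq)
          have hqY : q ∉ Y := fun h => hYφ q h hfv
          have h3 : q ∉ X.image mp := by
            rw [Finset.mem_image]; rintro ⟨x, hx, rfl⟩; exact (hmp x hx).2.1 hfv
          have h4 : q ∉ X.image mn := by
            rw [Finset.mem_image]; rintro ⟨x, hx, rfl⟩; exact (hmn x hx).2.1 hfv
          rw [if_neg hqX, if_neg (fun h => hqX (Finset.mem_toList.mp h)),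
            hWelse q hqp hqY h3, hWm q h4]
          exact (hW₀ q hqY).symm
      · refine (hbig W).mpr (fun x hx _ => ?_)
        have hWmn : W (mn x) = Wm (mn x) := by
          have h1 : mn x ≠ p := (hmn x hx).2.2.2.2
          have h2 : mn x ∉ Y := (hmn x hx).2.2.1
          have h3 : mn x ∉ X.image mp := by
            rw [Finset.mem_image]
            rintro ⟨x', hx', he⟩
            exact hmp_ne_mn x' hx' x hx he
          exact hWelse _ h1 h2 h3
        rw [hWmp x hx, hWmn]
  · intro H
    by_cases hb : Sat V (qex X φ)
    · obtain ⟨U, hU, hUφ⟩ := hb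
      set Wm : ℕ → Bool := fun q =>
        if hq : ∃ x ∈ X, mn x = q then U hq.choose else V q with hWmdef
      have hWmmn : ∀ x ∈ X, Wm (mn x) = U x := by
        intro x hx
        have hex : ∃ x' ∈ X, mn x' = mn x := ⟨x, hx, rfl⟩
        rw [hWmdef]
        simp only [dif_pos hex]
        obtain ⟨hc1, hc2⟩ := hex.choose_spec
        rw [hmn_inj _ hc1 _ hx hc2]
      have hWmagree : ∀ q ∉ X.image mn, Wm q = V q := by
        intro q hq
        have hnex : ¬ ∃ x ∈ X, mn x = q := by
          rintro ⟨x, hx, rfl⟩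
          exact hq (Finset.mem_image.mpr ⟨x, hx, rfl⟩)
        rw [hWmdef]; simp only [dif_neg hnex]
      obtain ⟨W₁, hW₁, h1, h2, h3⟩ := H Wm hWmagree
      have hW₁out : ∀ q, q ≠ p → q ∉ Y → q ∉ X.image mp → q ∉ X.image mn →
          W₁ q = V q := by
        intro q e1 e2 e3 e4
        have hq' : q ∉ Y ∪ X.image mp ∪ {p} := by
          simp only [Finset.mem_union, Finset.mem_singleton, not_or]
          exact ⟨⟨e2, e3⟩, e1⟩
        rw [hW₁ q hq', hWmagree q e4]
      have hW₁mn : ∀ x ∈ X, W₁ (mn x) = U x := by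
        intro x hx
        have h1' : mn x ≠ p := (hmn x hx).2.2.2.2
        have h2' : mn x ∉ Y := (hmn x hx).2.2.1
        have h3' : mn x ∉ X.image mp := by
          rw [Finset.mem_image]
          rintro ⟨x', hx', he⟩
          exact hmp_ne_mn x' hx' x hx he
        have hq' : mn x ∉ Y ∪ X.image mp ∪ {p} := by
          simp only [Finset.mem_union, Finset.mem_singleton, not_or]
          exact ⟨⟨h2', h3'⟩, h1'⟩
        rw [hW₁ (mn x) hq', hWmmn x hx]
      by_cases hp1 : W₁ p = true
      · set W₀ : ℕ → Bool := fun q => if q ∈ Y then W₁ q else V q with hW₀def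
        have hW₀agree : ∀ q ∉ Y, W₀ q = V q := fun q hq => by
          rw [hW₀def]; simp [hq]
        refine ⟨W₀, hW₀agree, ?_⟩
        have hsφ := (hrename W₁).mp (h2.mp hp1)
        have hSatχ : Sat W₀ (qex X φ) := by
          refine ⟨fun q => if q ∈ X then W₁ (mp q) else W₀ q,
            fun q hq => by simp [hq], ?_⟩
          refine sat_of_eqOn_free φ _ _ (fun q hq => ?_) hsφ
          by_cases hqX : q ∈ X
          · rw [if_pos hqX, if_pos (Finset.mem_toList.mpr hqX)]
          · have hfv : q ∈ φ.vars := freeVars_subset_vars φ hq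
            have hqp : q ≠ p := fun h => hpφ (h ▸ hq)
            have hqY : q ∉ Y := fun h => hYφ q h hfv
            have h3' : q ∉ X.image mp := by
              rw [Finset.mem_image]; rintro ⟨x, hx, rfl⟩; exact (hmp x hx).2.1 hfv
            have h4' : q ∉ X.image mn := by
              rw [Finset.mem_image]; rintro ⟨x, hx, rfl⟩; exact (hmn x hx).2.1 hfv
            rw [if_neg hqX, if_neg (fun h => hqX (Finset.mem_toList.mp h)),
              hW₁out q hqp hqY h3' h4', hW₀agree q hqY]
        refine (sat_subst_outside p (qex X φ) W₀ true
          ⟨fun _ => hSatχ, fun _ => rfl⟩ ψ hpscope).mpr ?_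
        refine sat_of_eqOn_free ψ W₁ _ (fun q hq => ?_) h1
        have hqv := freeVars_subset_vars ψ hq
        by_cases hqp : q = p
        · subst hqp; rw [Function.update_self]; exact hp1
        · rw [Function.update_of_ne hqp]
          by_cases hqY : q ∈ Y
          · rw [hW₀def]; simp [hqY]
          · have h3' : q ∉ X.image mp := by
              rw [Finset.mem_image]; rintro ⟨x, hx, rfl⟩; exact (hmp x hx).1 hqv
            have h4' : q ∉ X.image mn := by
              rw [Finset.mem_image]; rintro ⟨x, hx, rfl⟩; exact (hmn x hx).1 hqv
            rw [hW₁out q hqp hqY h3' h4', hW₀agree q hqY]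
      · exfalso
        have h3' := (hbig W₁).mp h3
        apply hp1 ∘ h2.mpr
        rw [hrename W₁]
        refine sat_of_eqOn_free φ U _ (fun q hq => ?_) hUφ
        by_cases hqX : q ∈ X
        · have hiff := h3' q hqX hp1
          have heq : W₁ (mp q) = W₁ (mn q) := by
            revert hiff
            cases W₁ (mp q) <;> cases W₁ (mn q) <;> simp
          rw [if_pos (Finset.mem_toList.mpr hqX), heq, hW₁mn q hqX]
        · have hfv : q ∈ φ.vars := freeVars_subset_vars φ hq
          have hqp : q ≠ p := fun h => hpφ (h ▸ hq)
          have hqY : q ∉ Y := fun h => hYφ q h hfv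
          have e3 : q ∉ X.image mp := by
            rw [Finset.mem_image]; rintro ⟨x, hx, rfl⟩; exact (hmp x hx).2.1 hfv
          have e4 : q ∉ X.image mn := by
            rw [Finset.mem_image]; rintro ⟨x, hx, rfl⟩; exact (hmn x hx).2.1 hfv
          rw [hU q hqX, if_neg (fun h => hqX (Finset.mem_toList.mp h)),
            hW₁out q hqp hqY e3 e4]
    · obtain ⟨W₁, hW₁, h1, h2, h3⟩ := H V (fun q _ => rfl)
      have hW₁out : ∀ q, q ≠ p → q ∉ Y → q ∉ X.image mp → W₁ q = V q := by
        intro q e1 e2 e3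
        have hq' : q ∉ Y ∪ X.image mp ∪ {p} := by
          simp only [Finset.mem_union, Finset.mem_singleton, not_or]
          exact ⟨⟨e2, e3⟩, e1⟩
        exact hW₁ q hq'
      by_cases hp1 : W₁ p = true
      · exfalso
        apply hb
        have hsφ := (hrename W₁).mp (h2.mp hp1)
        refine ⟨fun q => if q ∈ X then W₁ (mp q) else V q,
          fun q hq => by simp [hq], ?_⟩
        refine sat_of_eqOn_free φ _ _ (fun q hq => ?_) hsφ
        by_cases hqX : q ∈ X
        · rw [if_pos hqX, if_pos (Finset.mem_toList.mpr hqX)]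
        · have hfv : q ∈ φ.vars := freeVars_subset_vars φ hq
          have hqp : q ≠ p := fun h => hpφ (h ▸ hq)
          have hqY : q ∉ Y := fun h => hYφ q h hfv
          have e3 : q ∉ X.image mp := by
            rw [Finset.mem_image]; rintro ⟨x, hx, rfl⟩; exact (hmp x hx).2.1 hfv
          rw [if_neg hqX, if_neg (fun h => hqX (Finset.mem_toList.mp h)),
            hW₁out q hqp hqY e3]
      · set W₀ : ℕ → Bool := fun q => if q ∈ Y then W₁ q else V q with hW₀def
        have hW₀agree : ∀ q ∉ Y, W₀ q = V q := fun q hq => by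
          rw [hW₀def]; simp [hq]
        refine ⟨W₀, hW₀agree, ?_⟩
        have hnot : ¬ Sat W₀ (qex X φ) := by
          intro hc
          apply hb
          refine sat_of_eqOn_free (qex X φ) W₀ V (fun q hq => ?_) hc
          simp only [freeVars, Finset.mem_sdiff] at hq
          exact hW₀agree q (fun h => hYφ q h (freeVars_subset_vars φ hq.1))
        refine (sat_subst_outside p (qex X φ) W₀ false
          (iff_of_false (by simp) hnot) ψ hpscope).mpr ?_
        refine sat_of_eqOn_free ψ W₁ _ (fun q hq => ?_) h1
        have hqv := freeVars_subset_vars ψ hq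
        by_cases hqp : q = p
        · subst hqp
          rw [Function.update_self]
          exact Bool.not_eq_true _ ▸ (Bool.eq_false_iff.mpr hp1)
        · rw [Function.update_of_ne hqp]
          by_cases hqY : q ∈ Y
          · rw [hW₀def]; simp [hqY]
          · have e3 : q ∉ X.image mp := by
              rw [Finset.mem_image]; rintro ⟨x, hx, rfl⟩; exact (hmp x hx).1 hqv
            rw [hW₁out q hqp hqY e3, hW₀agree q hqY]
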